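/- arXiv:2507.10359 — 2 statements merged into one kernel-verified Lean document; each statement's English description precedes it below -/
import Mathlib

section
/- Let γ : [0,1] → ℝ^d be continuously differentiable and m ≥ 1. Define the Bézier curve B(t) = Σ_{k=0}^{m} C(m,k) t^k (1-t)^{m-k} γ(k/m) with control points γ(k/m). Then ∫₀¹ ‖B'(t)‖² dt ≤ ∫₀¹ ‖γ'(t)‖² dt. -/
open MeasureTheory intervalIntegral

section aux
variable {E : Type*} [NormedAddCommGroup E] [NormedSpace ℝ E]

lemma convexOn_normsq : ConvexOn ℝ (Set.univ) (fun x : E => ‖x‖^2) := by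
  refine ⟨convex_univ, fun x _ y _ a b ha hb hab => ?_⟩
  have h1 : ‖a • x + b • y‖ ≤ a * ‖x‖ + b * ‖y‖ := by
    calc ‖a•x+b•y‖ ≤ ‖a•x‖+‖b•y‖ := norm_add_le _ _
    _ = a*‖x‖+b*‖y‖ := by
        rw [norm_smul, norm_smul, Real.norm_of_nonneg ha, Real.norm_of_nonneg hb]
  have h2 : ‖a • x + b • y‖^2 ≤ (a * ‖x‖ + b * ‖y‖)^2 :=
    pow_le_pow_left₀ (norm_nonneg _) h1 2
  simp only [smul_eq_mul]
  nlinarith [norm_nonneg x, norm_nonneg y, sq_nonneg (‖x‖-‖y‖), mul_nonneg ha hb]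

lemma bernstein_deriv_sum (n : ℕ) (v : ℕ → E) (t : ℝ) :
    ∑ k ∈ Finset.range (n+2), ((((n+1).choose k : ℝ) * (((k:ℝ) * t^(k-1)) * (1-t)^(n+1-k)
        - ((n+1-k : ℕ) : ℝ) * (t^k * (1-t)^(n-k))))) • v k
    = ∑ k ∈ Finset.range (n+1),
        (((n:ℝ)+1) * ((n.choose k : ℝ) * (t^k * (1-t)^(n-k)))) • (v (k+1) - v k) := by
  have hA : ∀ k, ((((n+1).choose k : ℝ) * (((k:ℝ) * t^(k-1)) * (1-t)^(n+1-k)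
        - ((n+1-k : ℕ) : ℝ) * (t^k * (1-t)^(n-k))))) • v k
      = (((k:ℝ) * ((n+1).choose k : ℝ)) * (t^(k-1) * (1-t)^(n+1-k))) • v k
        - (((((n+1-k : ℕ)) : ℝ) * ((n+1).choose k : ℝ)) * (t^k * (1-t)^(n-k))) • v k := by
    intro k; rw [← sub_smul]; congr 1; ring
  simp only [hA, Finset.sum_sub_distrib]
  rw [Finset.sum_range_succ'
    (fun k => (((k:ℝ) * ((n+1).choose k : ℝ)) * (t^(k-1) * (1-t)^(n+1-k))) • v k) (n+1)]
  rw [Finset.sum_range_succ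
    (fun k => (((((n+1-k : ℕ)) : ℝ) * ((n+1).choose k : ℝ)) * (t^k * (1-t)^(n-k))) • v k) (n+1)]
  simp only [Nat.cast_zero, zero_mul, zero_smul, add_zero, Nat.sub_self, Nat.cast_zero]
  have hA' : ∀ k ∈ Finset.range (n+1),
      (((((k+1:ℕ):ℝ)) * ((n+1).choose (k+1) : ℝ)) * (t^(k+1-1) * (1-t)^(n+1-(k+1)))) • v (k+1)
      = ((((n:ℝ)+1) * ((n.choose k : ℝ) * (t^k * (1-t)^(n-k))))) • v (k+1) := by
    intro k _
    have hnat : (k+1) * ((n+1).choose (k+1)) = (n+1) * n.choose k := by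
      rw [mul_comm (k+1), ← Nat.add_one_mul_choose_eq]
    have : (((k+1:ℕ):ℝ)) * ((n+1).choose (k+1) : ℝ) = ((n:ℝ)+1) * (n.choose k : ℝ) := by
      exact_mod_cast congrArg (fun x : ℕ => (x:ℝ)) hnat
    rw [show n+1-(k+1) = n-k from by omega, show k+1-1 = k from rfl, this]
    ring_nf
  have hB' : ∀ k ∈ Finset.range (n+1),
      (((((n+1-k : ℕ)) : ℝ) * ((n+1).choose k : ℝ)) * (t^k * (1-t)^(n-k))) • v k
      = ((((n:ℝ)+1) * ((n.choose k : ℝ) * (t^k * (1-t)^(n-k))))) • v k := by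
    intro k hk
    have hnat : ((n+1).choose k) * (n+1-k) = n.choose k * (n+1) :=
      (Nat.choose_mul_succ_eq n k).symm
    have : (((n+1-k : ℕ)) : ℝ) * ((n+1).choose k : ℝ) = ((n:ℝ)+1) * (n.choose k : ℝ) := by
      have := congrArg (fun x : ℕ => (x:ℝ)) hnat
      push_cast at this
      linarith
    rw [this]; ring_nf
  rw [Finset.sum_congr rfl hA', Finset.sum_congr rfl hB', ← Finset.sum_sub_distrib]
  apply Finset.sum_congr rfl
  intro k _
  rw [smul_sub]

lemma bezier_hasDerivAt (n : ℕ) (v : ℕ → E) (t : ℝ) :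
    HasDerivAt
      (fun t : ℝ => ∑ k ∈ Finset.range (n+2),
        (((n+1).choose k : ℝ) * t^k * (1-t)^(n+1-k)) • v k)
      (∑ k ∈ Finset.range (n+1),
        (((n:ℝ)+1) * ((n.choose k : ℝ) * (t^k * (1-t)^(n-k)))) • (v (k+1) - v k)) t := by
  rw [← bernstein_deriv_sum n v t]
  apply HasDerivAt.fun_sum
  intro k _
  have h1 : HasDerivAt (fun t:ℝ => ((n+1).choose k : ℝ) * t^k)
      (((n+1).choose k : ℝ) * (k * t^(k-1))) t := (hasDerivAt_pow k t).const_mul _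
  have h2 : HasDerivAt (fun t:ℝ => (1-t)^(n+1-k))
      (((n+1-k : ℕ) : ℝ) * (1-t)^(n+1-k-1) * (-1)) t :=
    ((hasDerivAt_id t).const_sub 1).pow (n+1-k)
  have h3 : HasDerivAt (fun y : ℝ => (((n+1).choose k : ℝ) * y^k * (1-y)^(n+1-k)) • v k) _ t :=
    (h1.mul h2).smul_const (v k)
  convert h3 using 2
  rw [show n+1-k-1 = n-k from by omega]
  ring

lemma beta_nat (p : ℕ) : ∀ j : ℕ, ∫ t in (0:ℝ)..1, t^j * (1-t)^p
    = (j.factorial * p.factorial : ℝ) / (j+p+1).factorial := by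
  induction p with
  | zero =>
    intro j
    simp only [pow_zero, mul_one, integral_pow, Nat.add_zero, Nat.factorial_succ]
    push_cast
    rw [one_pow, zero_pow (by omega), sub_zero]
    field_simp
    simp
  | succ p ih =>
    intro j
    have hjne : ((j:ℝ)+1) ≠ 0 := by positivity
    have hu : ∀ x ∈ Set.uIcc (0:ℝ) 1, HasDerivAt (fun t:ℝ => (1-t)^(p+1))
        (-(((p:ℝ)+1) * (1-x)^p)) x := by
      intro x _
      have := ((hasDerivAt_id x).const_sub 1).pow (p+1)
      refine this.congr_deriv ?_
      simp
    have hv : ∀ x ∈ Set.uIcc (0:ℝ) 1, HasDerivAt (fun t:ℝ => t^(j+1)/((j:ℝ)+1))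
        (x^j) x := by
      intro x _
      have := (hasDerivAt_pow (j+1) x).div_const ((j:ℝ)+1)
      refine this.congr_deriv ?_
      push_cast
      field_simp
    have hu' : IntervalIntegrable (fun x:ℝ => -(((p:ℝ)+1) * (1-x)^p)) volume 0 1 :=
      (Continuous.intervalIntegrable (by fun_prop) 0 1)
    have hv' : IntervalIntegrable (fun x:ℝ => x^j) volume 0 1 :=
      (Continuous.intervalIntegrable (by fun_prop) 0 1)
    have key := intervalIntegral.integral_mul_deriv_eq_deriv_mul hu hv hu' hv'
    have h1 : (∫ t in (0:ℝ)..1, t^j * (1-t)^(p+1))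
        = ∫ x in (0:ℝ)..1, (1-x)^(p+1) * x^j := by
      apply intervalIntegral.integral_congr
      intro x _; ring
    rw [h1, key]
    have h2 : (∫ x in (0:ℝ)..1, -(((p:ℝ)+1) * (1-x)^p) * (x^(j+1)/((j:ℝ)+1)))
        = (-((p:ℝ)+1)/((j:ℝ)+1)) * ∫ x in (0:ℝ)..1, x^(j+1) * (1-x)^p := by
      rw [← intervalIntegral.integral_const_mul]
      apply intervalIntegral.integral_congr
      intro x _
      field_simp
    rw [h2, ih (j+1)]
    have e1 : j + 1 + p + 1 = j + (p+1) + 1 := by omega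
    rw [e1]
    have hfac : ((j + (p+1) + 1).factorial : ℝ) ≠ 0 := by positivity
    rw [Nat.factorial_succ j, Nat.factorial_succ p]
    push_cast
    field_simp
    ring

variable [CompleteSpace E]

lemma avg_bound {f : ℝ → E} (hf : Continuous f) {a b : ℝ} (hab : a < b) :
    ‖(b-a)⁻¹ • ∫ x in Set.Ioc a b, f x‖^2 ≤ (b-a)⁻¹ * ∫ x in Set.Ioc a b, ‖f x‖^2 := by
  have hba : 0 < b - a := sub_pos.2 hab
  have h0 : volume (Set.Ioc a b) ≠ 0 := by
    simp [Real.volume_Ioc, hab]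
  have ht : volume (Set.Ioc a b) ≠ ⊤ := by
    simp [Real.volume_Ioc]
  have hint1 : IntegrableOn f (Set.Ioc a b) volume :=
    hf.integrableOn_Ioc
  have hint2 : IntegrableOn ((fun x : E => ‖x‖^2) ∘ f) (Set.Ioc a b) volume :=
    ((hf.norm.pow 2)).integrableOn_Ioc
  have hJ := (convexOn_normsq (E := E)).map_set_average_le
    (((continuous_pow 2).comp continuous_norm).continuousOn)
    isClosed_univ h0 ht
    (Filter.Eventually.of_forall fun _ => Set.mem_univ _) hint1 hint2
  rw [setAverage_eq, setAverage_eq] at hJ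
  rw [Real.volume_real_Ioc_of_le hab.le] at hJ
  simpa using hJ

end aux

/-- The Bézier curve with control points γ(k/m) has Dirichlet energy no greater
than that of the C¹ curve γ. -/
theorem bezier_energy_le {d m : ℕ} (hm : 1 ≤ m)
    (γ : ℝ → EuclideanSpace ℝ (Fin d)) (hγ : ContDiff ℝ 1 γ)
    (B : ℝ → EuclideanSpace ℝ (Fin d))
    (hB : ∀ t : ℝ, B t = ∑ k ∈ Finset.range (m+1),
      ((m.choose k : ℝ) * t^k * (1-t)^(m-k)) • γ ((k : ℝ) / m)) :
    ∫ t in (0:ℝ)..1, ‖deriv B t‖^2 ≤ ∫ t in (0:ℝ)..1, ‖deriv γ t‖^2 := by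
  obtain ⟨n, rfl⟩ : ∃ n, m = n + 1 := ⟨m - 1, by omega⟩
  have hγd : Continuous (deriv γ) := hγ.continuous_deriv le_rfl
  have hpos : (0:ℝ) < (n:ℝ)+1 := by positivity
  set v : ℕ → EuclideanSpace ℝ (Fin d) := fun k => γ ((k:ℝ)/((n:ℝ)+1)) with hv
  set w : ℕ → EuclideanSpace ℝ (Fin d) := fun k => v (k+1) - v k with hw
  set q : ℕ → ℝ → ℝ := fun k t => (n.choose k : ℝ) * (t^k * (1-t)^(n-k)) with hq
  set D : ℝ → EuclideanSpace ℝ (Fin d) := fun t => ∑ k ∈ Finset.range (n+1),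
      (((n:ℝ)+1) * q k t) • w k with hD
  set a : ℕ → ℝ := fun k => (k:ℝ)/((n:ℝ)+1) with haa
  have hBf : B = fun t => ∑ k ∈ Finset.range (n+2),
      (((n+1).choose k : ℝ) * t^k * (1-t)^(n+1-k)) • v k := by
    funext t
    rw [hB t]
    apply Finset.sum_congr rfl
    intro k _
    have hcast : ((n+1 : ℕ) : ℝ) = (n:ℝ)+1 := by push_cast; ring
    rw [hv, hcast]
  have hderivB : ∀ t : ℝ, deriv B t = D t := by
    intro t
    rw [hBf]
    exact (bezier_hasDerivAt n v t).deriv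
  -- pointwise Jensen on [0,1]
  have hpoint : ∀ t ∈ Set.Icc (0:ℝ) 1,
      ‖D t‖^2 ≤ ∑ k ∈ Finset.range (n+1), q k t * ‖((n:ℝ)+1) • w k‖^2 := by
    intro t ht
    have hq0 : ∀ k ∈ Finset.range (n+1), 0 ≤ q k t := by
      intro k _
      have h1 : (0:ℝ) ≤ t := ht.1
      have h2 : (0:ℝ) ≤ 1 - t := by linarith [ht.2]
      simp only [hq]
      positivity
    have hqsum : ∑ k ∈ Finset.range (n+1), q k t = 1 := by
      have hap := add_pow t (1-t) n
      have h1 : t + (1-t) = 1 := by ring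
      rw [h1, one_pow] at hap
      rw [hap]
      apply Finset.sum_congr rfl
      intro k _
      simp only [hq]
      ring
    have hDt : D t = ∑ k ∈ Finset.range (n+1), q k t • (((n:ℝ)+1) • w k) := by
      simp only [hD]
      apply Finset.sum_congr rfl
      intro k _
      rw [smul_smul]
      ring_nf
    rw [hDt]
    have := convexOn_normsq.map_sum_le hq0 hqsum
      (fun k _ => Set.mem_univ (((n:ℝ)+1) • w k))
    simpa using this
  -- continuity facts
  have hqcont : ∀ k, Continuous (fun t => q k t) := by
    intro k; simp only [hq]; fun_prop
  have hDcont : Continuous D := by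
    simp only [hD]
    apply continuous_finset_sum
    intro k _
    exact (continuous_const.mul (hqcont k)).smul continuous_const
  -- interval endpoints
  have hak : ∀ k : ℕ, a k < a (k+1) := by
    intro k
    simp only [haa]
    rw [div_lt_div_iff₀ hpos hpos]
    push_cast
    nlinarith [Nat.cast_nonneg (α := ℝ) k, Nat.cast_nonneg (α := ℝ) n]
  have hlen : ∀ k : ℕ, a (k+1) - a k = 1/((n:ℝ)+1) := by
    intro k
    simp only [haa]
    push_cast
    field_simp
    ring
  have hwint : ∀ k : ℕ, w k = ∫ x in Set.Ioc (a k) (a (k+1)), deriv γ x := by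
    intro k
    rw [← intervalIntegral.integral_of_le (hak k).le]
    rw [intervalIntegral.integral_deriv_eq_sub
      (fun x _ => (hγ.differentiable one_ne_zero) x) (hγd.intervalIntegrable _ _)]
  have hwk : ∀ k : ℕ, ‖((n:ℝ)+1) • w k‖^2
      ≤ ((n:ℝ)+1) * ∫ t in a k..a (k+1), ‖deriv γ t‖^2 := by
    intro k
    have h := avg_bound hγd (hak k)
    rw [hlen k, one_div, inv_inv, ← hwint k] at h
    rw [intervalIntegral.integral_of_le (hak k).le]
    exact h
  -- integration chain
  have hIcont : Continuous (fun t => ∑ k ∈ Finset.range (n+1),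
      q k t * ‖((n:ℝ)+1) • w k‖^2) :=
    continuous_finset_sum _ (fun k _ => (hqcont k).mul continuous_const)
  have step1 : ∫ t in (0:ℝ)..1, ‖deriv B t‖^2 = ∫ t in (0:ℝ)..1, ‖D t‖^2 :=
    intervalIntegral.integral_congr (fun t _ => by rw [hderivB t])
  have step2 : ∫ t in (0:ℝ)..1, ‖D t‖^2 ≤ ∫ t in (0:ℝ)..1,
      ∑ k ∈ Finset.range (n+1), q k t * ‖((n:ℝ)+1) • w k‖^2 :=
    intervalIntegral.integral_mono_on (by norm_num)
      ((hDcont.norm.pow 2).intervalIntegrable 0 1)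
      (hIcont.intervalIntegrable 0 1) hpoint
  have step3 : (∫ t in (0:ℝ)..1, ∑ k ∈ Finset.range (n+1),
        q k t * ‖((n:ℝ)+1) • w k‖^2)
      = ∑ k ∈ Finset.range (n+1), (1/((n:ℝ)+1)) * ‖((n:ℝ)+1) • w k‖^2 := by
    rw [intervalIntegral.integral_finset_sum (f := fun k t => q k t * ‖((n:ℝ)+1) • w k‖^2)
      (fun k _ => (((hqcont k).mul continuous_const : Continuous fun t => q k t * ‖((n:ℝ)+1) • w k‖^2)).intervalIntegrable 0 1)]
    apply Finset.sum_congr rfl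
    intro k hk
    rw [intervalIntegral.integral_mul_const]
    congr 1
    simp only [hq]
    rw [intervalIntegral.integral_const_mul, beta_nat (n-k) k]
    have hkn : k ≤ n := by
      have := Finset.mem_range.mp hk; omega
    rw [show k + (n-k) + 1 = n+1 from by omega]
    have hcf : (n.choose k) * k.factorial * (n-k).factorial = n.factorial :=
      Nat.choose_mul_factorial_mul_factorial hkn
    have hcfr : ((n.choose k : ℕ):ℝ) * ((k.factorial : ℕ):ℝ) * (((n-k).factorial : ℕ):ℝ)
        = ((n.factorial : ℕ):ℝ) := by exact_mod_cast congrArg (Nat.cast (R := ℝ)) hcf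
    rw [Nat.factorial_succ n]
    have hnf : ((n.factorial : ℕ):ℝ) ≠ 0 := by positivity
    push_cast
    push_cast at hcfr
    field_simp
    linear_combination hcfr
  have step4 : ∑ k ∈ Finset.range (n+1), (1/((n:ℝ)+1)) * ‖((n:ℝ)+1) • w k‖^2
      ≤ ∑ k ∈ Finset.range (n+1), ∫ t in a k..a (k+1), ‖deriv γ t‖^2 := by
    apply Finset.sum_le_sum
    intro k _
    calc (1/((n:ℝ)+1)) * ‖((n:ℝ)+1) • w k‖^2
        ≤ (1/((n:ℝ)+1)) * (((n:ℝ)+1) * ∫ t in a k..a (k+1), ‖deriv γ t‖^2) :=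
          mul_le_mul_of_nonneg_left (hwk k) (by positivity)
      _ = ∫ t in a k..a (k+1), ‖deriv γ t‖^2 := by field_simp
  have step5 : ∑ k ∈ Finset.range (n+1), (∫ t in a k..a (k+1), ‖deriv γ t‖^2)
      = ∫ t in (0:ℝ)..1, ‖deriv γ t‖^2 := by
    rw [intervalIntegral.sum_integral_adjacent_intervals (f := fun t => ‖deriv γ t‖^2)
      (fun k _ => ((hγd.norm.pow 2 : Continuous fun t => ‖deriv γ t‖^2)).intervalIntegrable _ _)]
    have h0 : a 0 = 0 := by simp [haa]
    have h1 : a (n+1) = 1 := by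
      simp only [haa]; push_cast; field_simp
    rw [h0, h1]
  rw [step1]
  exact step2.trans (le_of_eq step3 |>.trans (step4.trans (le_of_eq step5)))
end

section
/- Let Γ be a metric space, w : Γ → (0, +∞] a lower semicontinuous function, and D = { σ ∈ M₊(Γ) : ∫_Γ w dσ ≤ 1 } the set of nonnegative finite Radon measures with w-mass at most 1. Then for any γ ∈ Γ with w(γ) < +∞, the measure w(γ)^{-1} δ_γ is an extreme point of the convex set D. -/
open MeasureTheory
open scoped ENNReal

/-- For a lower semicontinuous positive weight w and γ with w(γ) < ∞, the
rescaled Dirac measure w(γ)⁻¹ δ_γ is an extreme point of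
D = {σ ∈ M₊(Γ) : ∫ w dσ ≤ 1}. -/
theorem dirac_extreme_point {Γ : Type*} [MetricSpace Γ] [MeasurableSpace Γ] [BorelSpace Γ]
    (w : Γ → ℝ≥0∞) (hw : LowerSemicontinuous w) (hwpos : ∀ γ, 0 < w γ)
    (γ : Γ) (hγ : w γ < ⊤) :
    ∀ σ₁ σ₂ : Measure Γ, IsFiniteMeasure σ₁ → IsFiniteMeasure σ₂ →
      (∫⁻ x, w x ∂σ₁) ≤ 1 → (∫⁻ x, w x ∂σ₂) ≤ 1 →
      ∀ lam : ℝ≥0∞, 0 < lam → lam < 1 →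
        (w γ)⁻¹ • Measure.dirac γ = lam • σ₁ + (1 - lam) • σ₂ →
        σ₁ = (w γ)⁻¹ • Measure.dirac γ ∧ σ₂ = (w γ)⁻¹ • Measure.dirac γ := by
  intro σ₁ σ₂ h₁f h₂f h₁ h₂ lam hl0 hl1 heq
  have hwγ0 : w γ ≠ 0 := (hwpos γ).ne'
  have hwm : Measurable w := hw.measurable
  have hwinv_top : (w γ)⁻¹ ≠ ⊤ := by simpa [ENNReal.inv_ne_top] using hwγ0
  have hltop : lam ≠ ⊤ := (hl1.trans ENNReal.one_lt_top).ne
  have h1l0 : 0 < 1 - lam := tsub_pos_of_lt hl1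
  -- complements vanish
  have hcompl : ((w γ)⁻¹ • Measure.dirac γ) ({γ}ᶜ) = 0 := by
    rw [Measure.smul_apply, Measure.dirac_apply' _ (measurableSet_singleton γ).compl]
    simp
  have h0 : lam * σ₁ {γ}ᶜ + (1 - lam) * σ₂ {γ}ᶜ = 0 := by
    rw [heq] at hcompl
    simpa [Measure.add_apply, Measure.smul_apply, smul_eq_mul] using hcompl
  obtain ⟨ha, hb⟩ := add_eq_zero.1 h0
  have hσ₁c : σ₁ {γ}ᶜ = 0 := (mul_eq_zero.1 ha).resolve_left hl0.ne'
  have hσ₂c : σ₂ {γ}ᶜ = 0 := (mul_eq_zero.1 hb).resolve_left h1l0.ne'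
  -- measures supported at γ are multiples of dirac
  have key : ∀ σ : Measure Γ, σ {γ}ᶜ = 0 → σ = σ {γ} • Measure.dirac γ := by
    intro σ hσ
    ext A hA
    rw [Measure.smul_apply, Measure.dirac_apply' _ hA, smul_eq_mul]
    by_cases hγA : γ ∈ A
    · have hsplit := measure_inter_add_diff (μ := σ) A (measurableSet_singleton γ)
      have hdiff : σ (A \ {γ}) = 0 :=
        measure_mono_null (Set.diff_subset_compl A {γ}) hσ
      have hinter : A ∩ {γ} = {γ} := by
        apply Set.inter_eq_self_of_subset_right
        simpa using hγA
      rw [hinter, hdiff, add_zero] at hsplit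
      simp [← hsplit, Set.indicator_of_mem hγA]
    · have : σ A = 0 := measure_mono_null (by simpa [Set.subset_compl_singleton_iff] using hγA) hσ
      simp [this, Set.indicator_of_notMem hγA]
  have hk1 := key σ₁ hσ₁c
  have hk2 := key σ₂ hσ₂c
  set c₁ := σ₁ {γ} with hc₁
  set c₂ := σ₂ {γ} with hc₂
  -- bounds on c₁, c₂
  have hbound : ∀ (σ : Measure Γ), σ = σ {γ} • Measure.dirac γ → (∫⁻ x, w x ∂σ) ≤ 1 →
      σ {γ} ≤ (w γ)⁻¹ := by
    intro σ hk h
    rw [hk] at h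
    rw [lintegral_smul_measure, lintegral_dirac' _ hwm] at h
    exact (ENNReal.le_inv_iff_mul_le).2 h
  have hb1 : c₁ ≤ (w γ)⁻¹ := hbound σ₁ hk1 h₁
  have hb2 : c₂ ≤ (w γ)⁻¹ := hbound σ₂ hk2 h₂
  -- evaluate at {γ}
  have heval : (w γ)⁻¹ = lam * c₁ + (1 - lam) * c₂ := by
    have := congrArg (fun μ : Measure Γ => μ {γ}) heq
    simpa [Measure.add_apply, Measure.smul_apply, smul_eq_mul,
      Measure.dirac_apply' _ (measurableSet_singleton γ)] using this
  have hsum : lam + (1 - lam) = 1 := add_tsub_cancel_of_le hl1.le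
  have hc1 : c₁ = (w γ)⁻¹ := by
    by_contra hne
    have hlt : c₁ < (w γ)⁻¹ := lt_of_le_of_ne hb1 hne
    have : lam * c₁ + (1 - lam) * c₂ < (w γ)⁻¹ := by
      calc lam * c₁ + (1 - lam) * c₂
          < lam * (w γ)⁻¹ + (1 - lam) * (w γ)⁻¹ := by
            apply ENNReal.add_lt_add_of_lt_of_le
            · exact ENNReal.mul_ne_top (by simp [ENNReal.sub_eq_top_iff])
                ((hb2.trans_lt (lt_top_iff_ne_top.2 hwinv_top)).ne)
            · exact ENNReal.mul_lt_mul_iff_right hl0.ne' hltop |>.2 hlt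
            · exact mul_le_mul_right hb2 _
        _ = (w γ)⁻¹ := by rw [← add_mul, hsum, one_mul]
    rw [← heval] at this
    exact absurd this (lt_irrefl _)
  have hc2 : c₂ = (w γ)⁻¹ := by
    by_contra hne
    have hlt : c₂ < (w γ)⁻¹ := lt_of_le_of_ne hb2 hne
    have : lam * c₁ + (1 - lam) * c₂ < (w γ)⁻¹ := by
      calc lam * c₁ + (1 - lam) * c₂
          ≤ lam * (w γ)⁻¹ + (1 - lam) * c₂ := by
            exact add_le_add_left (mul_le_mul_right hb1 _) _
        _ < lam * (w γ)⁻¹ + (1 - lam) * (w γ)⁻¹ := by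
            apply ENNReal.add_lt_add_left
            · exact ENNReal.mul_ne_top hltop hwinv_top
            · exact (ENNReal.mul_lt_mul_iff_right h1l0.ne' (by simp [ENNReal.sub_eq_top_iff])).2 hlt
        _ = (w γ)⁻¹ := by rw [← add_mul, hsum, one_mul]
    rw [← heval] at this
    exact absurd this (lt_irrefl _)
  refine ⟨?_, ?_⟩
  · rw [hk1, hc1]
  · rw [hk2, hc2]
end
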